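/- Deterministic core of the score-based Euclidean aggregation bound: let (V, ‖·‖) be a seminormed real vector space, x, x₁, ..., x_N ∈ V, and Δ_{ij} = Δ_{ji} ≥ 0 given thresholds with Δ̄ = max_{i≠j} Δ_{ij}. Let ρ* = min_i ‖x - x_i‖. Suppose A ⊆ {(i,j) : i ≠ j} ('the test rejects hypothesis i against j') is a set such that: (a) if ‖x - x_j‖ ≥ ‖x - x_i‖ + Δ_{ij} then (i,j) ∉ A; and (b) for each i ≠ j, exactly one of (i,j) ∈ A, (j,i) ∈ A holds. Define scores s_i = #{j ≠ i : (i,j) ∈ A}, and let î minimize s_i. Then ‖x - x_î‖ ≤ ρ* + 2Δ̄. -/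

import Mathlib

/-- Deterministic core of the score-based Euclidean aggregation bound. -/
theorem score_aggregation_bound (V : Type*) [SeminormedAddCommGroup V]
    [NormedSpace ℝ V] (N : ℕ) (hN : 0 < N)
    (x : V) (xs : Fin N → V)
    (Δ : Fin N → Fin N → ℝ) (hΔsym : ∀ i j, Δ i j = Δ j i) (hΔ0 : ∀ i j, 0 ≤ Δ i j)
    (Δbar : ℝ) (hΔbar : Δbar = sSup {a : ℝ | ∃ i j, i ≠ j ∧ a = Δ i j})
    (ρstar : ℝ) (hρ : ρstar = sInf {a : ℝ | ∃ i, a = ‖x - xs i‖})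
    (A : Fin N → Fin N → Prop)
    (ha : ∀ i j, i ≠ j → ‖x - xs j‖ ≥ ‖x - xs i‖ + Δ i j → ¬ A i j)
    (hb : ∀ i j, i ≠ j → (A i j ↔ ¬ A j i))
    (s : Fin N → ℕ) (hs : ∀ i, s i = Set.ncard {j : Fin N | j ≠ i ∧ A i j})
    (ihat : Fin N) (hmin : ∀ i, s ihat ≤ s i) :
    ‖x - xs ihat‖ ≤ ρstar + 2 * Δbar := by
  set S : Set ℝ := {a : ℝ | ∃ i, a = ‖x - xs i‖} with hS
  have hSfin : S.Finite := by
    have : S ⊆ (fun i : Fin N => ‖x - xs i‖) '' Set.univ := by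
      rintro a ⟨i, rfl⟩; exact ⟨i, trivial, rfl⟩
    exact (Set.finite_univ.image _).subset this
  have hSne : S.Nonempty := ⟨‖x - xs ⟨0, hN⟩‖, ⟨0, hN⟩, rfl⟩
  have hmem : ρstar ∈ S := hρ ▸ hSne.csInf_mem hSfin
  obtain ⟨istar, histar⟩ := hmem
  have hρle : ∀ i, ρstar ≤ ‖x - xs i‖ := fun i => by
    rw [hρ]; exact csInf_le hSfin.bddBelow ⟨i, rfl⟩
  set T : Set ℝ := {a : ℝ | ∃ i j, i ≠ j ∧ a = Δ i j} with hT
  have hTfin : T.Finite := by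
    have : T ⊆ (fun p : Fin N × Fin N => Δ p.1 p.2) '' Set.univ := by
      rintro a ⟨i, j, _, rfl⟩; exact ⟨(i, j), trivial, rfl⟩
    exact (Set.finite_univ.image _).subset this
  have hΔle : ∀ i j, i ≠ j → Δ i j ≤ Δbar := fun i j hij => by
    rw [hΔbar]; exact le_csSup hTfin.bddAbove ⟨i, j, hij, rfl⟩
  have hΔbar0 : 0 ≤ Δbar := by
    rcases Set.eq_empty_or_nonempty T with h | ⟨a, i, j, hij, rfl⟩
    · rw [hΔbar, h, Real.sSup_empty]
    · exact (hΔ0 i j).trans (hΔle i j hij)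
  by_contra hcon
  push_neg at hcon
  set W : Set (Fin N) := {j | ‖x - xs j‖ ≤ ρstar + Δbar} with hW
  have histarW : istar ∈ W := by
    simp only [hW, Set.mem_setOf_eq]
    linarith [histar]
  have h1 : s istar < W.ncard := by
    have hsub : {j : Fin N | j ≠ istar ∧ A istar j} ⊆ W \ {istar} := by
      rintro j ⟨hj, hAj⟩
      refine ⟨?_, hj⟩
      by_contra hjW
      simp only [hW, Set.mem_setOf_eq, not_le] at hjW
      exact ha istar j (Ne.symm hj)
        (by linarith [hΔle istar j (Ne.symm hj), histar]) hAj
    calc s istar = Set.ncard {j : Fin N | j ≠ istar ∧ A istar j} := hs istar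
      _ ≤ (W \ {istar}).ncard := Set.ncard_le_ncard hsub (Set.toFinite _)
      _ < W.ncard := Set.ncard_lt_ncard
          ((Set.sdiff_singleton_ssubset).2 histarW) (Set.toFinite _)
  have h2 : W.ncard ≤ s ihat := by
    have hsub : W ⊆ {j : Fin N | j ≠ ihat ∧ A ihat j} := by
      intro j hjW
      simp only [hW, Set.mem_setOf_eq] at hjW
      have hj : j ≠ ihat := by
        intro h; rw [h] at hjW; linarith
      have hΔjle : Δ j ihat ≤ Δbar := hΔle j ihat hj
      have hnA : ¬ A j ihat := ha j ihat hj (by linarith)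
      exact ⟨hj, (hb ihat j (Ne.symm hj)).2 hnA⟩
    rw [hs ihat]
    exact Set.ncard_le_ncard hsub (Set.toFinite _)
  have := hmin istar
  omega
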